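/- If there is no negative cycle, then for all vertices a, b ∈ V and every directed walk W from a to b there exists a directed walk from a to b with no repeated vertices (a directed path) whose weight is at most the weight of W; consequently, whenever some directed walk from a to b exists, the infimum of the weights of directed walks from a to b is attained and equals the minimum weight of a directed path from a to b. -/

import Mathlib

/-- A directed walk from `a` to `b` along edge relation `E`, recorded as the list of its
vertices. -/
def IsWalk {V : Type*} (E : V → V → Prop) (a b : V) (l : List V) : Prop :=
  l.head? = some a ∧ l.getLast? = some b ∧ l.Chain' E

/-- The total weight of a walk. -/
def walkWeight {V : Type*} (δ : V → V → ℝ) (l : List V) : ℝ :=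
  ((l.zip l.tail).map fun p => δ p.1 p.2).sum

/-- A negative cycle: a directed walk from some vertex to itself with at least one edge
and negative total weight. -/
def HasNegCycle {V : Type*} (E : V → V → Prop) (δ : V → V → ℝ) : Prop :=
  ∃ (a : V) (l : List V), IsWalk E a a l ∧ 2 ≤ l.length ∧ walkWeight δ l < 0

section Aux

variable {V : Type*}

lemma walkWeight_singleton (δ : V → V → ℝ) (x : V) : walkWeight δ [x] = 0 := by
  simp [walkWeight]

lemma walkWeight_cons_cons (δ : V → V → ℝ) (x y : V) (t : List V) :
    walkWeight δ (x :: y :: t) = δ x y + walkWeight δ (y :: t) := by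
  simp [walkWeight]

lemma walkWeight_split (δ : V → V → ℝ) (x : V) :
    ∀ (l₁ : List V) (l₂ : List V),
      walkWeight δ (l₁ ++ x :: l₂) = walkWeight δ (l₁ ++ [x]) + walkWeight δ (x :: l₂)
  | [], l₂ => by simp [walkWeight_singleton]
  | [a], l₂ => by
    simp only [List.cons_append, List.nil_append, walkWeight_cons_cons,
      walkWeight_singleton]
    ring
  | a :: b :: l₁, l₂ => by
    have ih := walkWeight_split δ x (b :: l₁) l₂
    simp only [List.cons_append] at ih ⊢
    rw [walkWeight_cons_cons, walkWeight_cons_cons, ih]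
    ring

/-- Weight of splicing out a cycle. -/
lemma walkWeight_splice (δ : V → V → ℝ) (s t u : List V) (v : V) :
    walkWeight δ (s ++ v :: (t ++ v :: u)) =
      walkWeight δ (s ++ v :: u) + walkWeight δ ((v :: t) ++ [v]) := by
  have h1 := walkWeight_split δ v s (t ++ v :: u)
  have h2 := walkWeight_split δ v (v :: t) u
  have h3 := walkWeight_split δ v s u
  have e1 : v :: (t ++ v :: u) = (v :: t) ++ v :: u := by simp
  rw [h1, e1, h2, h3]
  ring

lemma duplicate_decomp {x : V} {l : List V} (hl : List.Duplicate x l) :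
    ∃ s t u : List V, l = s ++ x :: (t ++ x :: u) := by
  induction hl with
  | cons_mem hm =>
    obtain ⟨t, u, rfl⟩ := List.append_of_mem hm
    exact ⟨[], t, u, by simp⟩
  | @cons_duplicate y l' _ ih =>
    obtain ⟨s, t, u, rfl⟩ := ih
    exact ⟨y :: s, t, u, by simp⟩

/-- Splicing out one duplicate shortens a walk without increasing weight (given no
negative cycle). -/
lemma splice_walk {E : V → V → Prop} {δ : V → V → ℝ}
    (hnoneg : ¬ HasNegCycle E δ) {a b : V} (s t u : List V) (v : V)
    (hw : IsWalk E a b (s ++ v :: (t ++ v :: u))) :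
    IsWalk E a b (s ++ v :: u) ∧
      walkWeight δ (s ++ v :: u) ≤ walkWeight δ (s ++ v :: (t ++ v :: u)) := by
  obtain ⟨hhead, hlast, hchain⟩ := hw
  have e1 : s ++ v :: (t ++ v :: u) = s ++ ((v :: t) ++ v :: u) := by simp
  rw [e1] at hchain
  change List.IsChain E _ at hchain
  rw [List.isChain_append] at hchain
  obtain ⟨hcs, hc2, hlink⟩ := hchain
  rw [List.isChain_append] at hc2
  obtain ⟨hcvt, hcvu, hlink2⟩ := hc2
  -- the cycle v :: t ++ [v] has nonnegative weight
  have hcyc_chain : List.Chain' E ((v :: t) ++ [v]) := by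
    refine hcvt.append (List.isChain_singleton v) ?_
    intro x hx y hy
    simp only [List.head?_cons, Option.mem_def, Option.some.injEq] at hy
    subst hy
    exact hlink2 x hx v rfl
  have hcyc : IsWalk E v v ((v :: t) ++ [v]) := by
    refine ⟨by simp, ?_, hcyc_chain⟩
    rw [List.getLast?_append_of_ne_nil _ (by simp)]; simp
  have hcyc_nonneg : 0 ≤ walkWeight δ ((v :: t) ++ [v]) := by
    by_contra h
    exact hnoneg ⟨v, (v :: t) ++ [v], hcyc, by simp, by linarith⟩
  -- the spliced list is a walk from a to b
  have hchain' : List.Chain' E (s ++ v :: u) := by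
    refine hcs.append hcvu ?_
    intro x hx y hy
    simp only [List.head?_cons, Option.mem_def, Option.some.injEq] at hy
    subst hy
    exact hlink x hx v (by simp)
  have hhead' : (s ++ v :: u).head? = some a := by
    cases s with
    | nil => simpa using hhead
    | cons c s' => simpa using hhead
  have hlast' : (s ++ v :: u).getLast? = some b := by
    rw [List.getLast?_append_cons] at hlast ⊢
    rw [show v :: (t ++ v :: u) = (v :: t) ++ v :: u from by simp,
      List.getLast?_append_cons] at hlast
    exact hlast
  refine ⟨⟨hhead', hlast', hchain'⟩, ?_⟩
  rw [walkWeight_splice δ s t u v]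
  linarith

lemma shortcut {E : V → V → Prop} {δ : V → V → ℝ}
    (hnoneg : ¬ HasNegCycle E δ) (a b : V) :
    ∀ (n : ℕ) (l : List V), l.length ≤ n → IsWalk E a b l →
      ∃ l' : List V, IsWalk E a b l' ∧ l'.Nodup ∧ walkWeight δ l' ≤ walkWeight δ l := by
  intro n
  induction n with
  | zero =>
    intro l hlen hw
    have : l = [] := List.length_eq_zero_iff.1 (Nat.le_zero.1 hlen)
    subst this
    simp [IsWalk] at hw
  | succ n ih =>
    intro l hlen hw
    by_cases hnd : l.Nodup
    · exact ⟨l, hw, hnd, le_refl _⟩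
    · obtain ⟨x, hx⟩ := List.exists_duplicate_iff_not_nodup.2 hnd
      obtain ⟨s, t, u, rfl⟩ := duplicate_decomp hx
      obtain ⟨hw', hle⟩ := splice_walk hnoneg s t u x hw
      have hlen' : (s ++ x :: u).length ≤ n := by
        simp only [List.length_append, List.length_cons] at hlen ⊢
        omega
      obtain ⟨l', hl'w, hl'nd, hl'le⟩ := ih (s ++ x :: u) hlen' hw'
      exact ⟨l', hl'w, hl'nd, le_trans hl'le hle⟩

end Aux

theorem walk_shortcut_to_path_and_min_attained
    {V : Type*} [Fintype V] (E : V → V → Prop) (δ : V → V → ℝ)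
    (hnoneg : ¬ HasNegCycle E δ) (a b : V) :
    (∀ l : List V, IsWalk E a b l →
        ∃ l' : List V, IsWalk E a b l' ∧ l'.Nodup ∧ walkWeight δ l' ≤ walkWeight δ l) ∧
      ((∃ l : List V, IsWalk E a b l) →
        ∃ m : ℝ,
          IsLeast {x : ℝ | ∃ l : List V, IsWalk E a b l ∧ walkWeight δ l = x} m ∧
          IsLeast {x : ℝ | ∃ l : List V, IsWalk E a b l ∧ l.Nodup ∧ walkWeight δ l = x} m) := by
  have part1 : ∀ l : List V, IsWalk E a b l →
      ∃ l' : List V, IsWalk E a b l' ∧ l'.Nodup ∧ walkWeight δ l' ≤ walkWeight δ l :=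
    fun l hl => shortcut hnoneg a b l.length l (le_refl _) hl
  refine ⟨part1, ?_⟩
  rintro ⟨l₀, hl₀⟩
  set P : Set (List V) := {l | IsWalk E a b l ∧ l.Nodup} with hP
  have hPfin : P.Finite := by
    apply Set.Finite.subset (List.finite_length_le V (Fintype.card V))
    intro l hl
    exact hl.2.length_le_card
  have hPne : P.Nonempty := by
    obtain ⟨l', hw', hnd', _⟩ := part1 l₀ hl₀
    exact ⟨l', hw', hnd'⟩
  obtain ⟨lm, hlmP, hlmin⟩ := Set.exists_min_image P (walkWeight δ) hPfin hPne
  refine ⟨walkWeight δ lm, ⟨⟨lm, hlmP.1, rfl⟩, ?_⟩, ⟨⟨lm, hlmP.1, hlmP.2, rfl⟩, ?_⟩⟩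
  · rintro x ⟨l, hl, rfl⟩
    obtain ⟨l', hw', hnd', hle'⟩ := part1 l hl
    exact le_trans (hlmin l' ⟨hw', hnd'⟩) hle'
  · rintro x ⟨l, hl, hnd, rfl⟩
    exact hlmin l ⟨hl, hnd⟩
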